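/- Let (Ω, μ) be a probability space and (A_i)_{i∈ℕ} a sequence of pairwise independent measurable sets (μ(A_i ∩ A_j) = μ(A_i)μ(A_j) for i ≠ j) with Σ_{i=1}^∞ μ(A_i) = ∞. Then μ(limsup_{i→∞} A_i) = 1. -/

import Mathlib

open MeasureTheory Filter

/-- Chung–Erdős / second moment inequality for a finite family of sets:
`(∑ μ(A i))² ≤ μ(⋃ A i) * ∑∑ μ(A i ∩ A j)` -/
lemma aux_chung_erdos {Ω : Type*} [MeasurableSpace Ω] (μ : Measure Ω)
    (A : ℕ → Set Ω) (hA : ∀ i, MeasurableSet (A i)) (s : Finset ℕ) :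
    (∑ i ∈ s, μ (A i)) * (∑ i ∈ s, μ (A i)) ≤
      μ (⋃ i ∈ s, A i) * ∑ i ∈ s, ∑ j ∈ s, μ (A i ∩ A j) := by
  classical
  set U : Set Ω := ⋃ i ∈ s, A i with hU
  have hUm : MeasurableSet U := MeasurableSet.biUnion s.countable_toSet (fun i _ => hA i)
  set f : Ω → ENNReal := fun ω => ∑ i ∈ s, (A i).indicator 1 ω with hf
  have hfm : Measurable f := by
    apply Finset.measurable_sum
    exact fun i _ => (measurable_const.indicator (hA i))
  set g : Ω → ENNReal := U.indicator 1 with hg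
  have hgm : Measurable g := measurable_const.indicator hUm
  -- f * g = f
  have hfg : f * g = f := by
    funext ω
    by_cases hω : ω ∈ U
    · simp [hg, Set.indicator_of_mem hω]
    · have : f ω = 0 := by
        apply Finset.sum_eq_zero
        intro i hi
        have : ω ∉ A i := fun h => hω (Set.mem_biUnion hi h)
        simp [Set.indicator_of_notMem this]
      simp [Pi.mul_apply, this]
  -- ∫ f = ∑ μ (A i)
  have hintf : ∫⁻ ω, f ω ∂μ = ∑ i ∈ s, μ (A i) := by
    rw [hf, lintegral_finset_sum' s
      (f := fun i => (A i).indicator (1 : Ω → ENNReal))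
      (fun i _ => (measurable_const.indicator (hA i)).aemeasurable)]
    exact Finset.sum_congr rfl fun i _ => lintegral_indicator_one (hA i)
  -- ∫ f² = ∑∑ μ (A i ∩ A j)
  have hff : (fun ω => f ω * f ω) =
      fun ω => ∑ i ∈ s, ∑ j ∈ s, ((A i ∩ A j).indicator 1 ω) := by
    funext ω
    rw [hf]
    rw [Finset.sum_mul_sum]
    refine Finset.sum_congr rfl fun i _ => Finset.sum_congr rfl fun j _ => ?_
    rw [Set.inter_indicator_one]
    rfl
  have hintf2 : ∫⁻ ω, f ω * f ω ∂μ = ∑ i ∈ s, ∑ j ∈ s, μ (A i ∩ A j) := by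
    rw [show (fun ω => f ω * f ω) = fun ω => ∑ i ∈ s, ∑ j ∈ s, ((A i ∩ A j).indicator 1 ω)
      from hff]
    rw [lintegral_finset_sum' s
      (f := fun i a => ∑ j ∈ s, (A i ∩ A j).indicator (1 : Ω → ENNReal) a)
      (fun i _ => (Finset.measurable_sum _
        (fun j _ => measurable_const.indicator ((hA i).inter (hA j)))).aemeasurable)]
    refine Finset.sum_congr rfl fun i _ => ?_
    rw [lintegral_finset_sum' s
      (f := fun j => (A i ∩ A j).indicator (1 : Ω → ENNReal))
      (fun j _ => (measurable_const.indicator ((hA i).inter (hA j))).aemeasurable)]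
    exact Finset.sum_congr rfl fun j _ => lintegral_indicator_one ((hA i).inter (hA j))
  -- Cauchy-Schwarz
  have hconj : Real.HolderConjugate 2 2 := Real.holderConjugate_iff.mpr ⟨one_lt_two, by norm_num⟩
  have hCS := ENNReal.lintegral_mul_le_Lp_mul_Lq μ hconj hfm.aemeasurable hgm.aemeasurable
  rw [hfg] at hCS
  -- g ^ 2 = g
  have hgsq : ∀ ω, g ω ^ (2:ℝ) = g ω := by
    intro ω
    by_cases hω : ω ∈ U
    · simp [hg, Set.indicator_of_mem hω]
    · simp [hg, Set.indicator_of_notMem hω, ENNReal.zero_rpow_of_pos (by norm_num : (0:ℝ) < 2)]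
  have hfsq : ∀ ω, f ω ^ (2:ℝ) = f ω * f ω := by
    intro ω
    rw [show (2:ℝ) = ((2:ℕ):ℝ) by norm_num, ENNReal.rpow_natCast, sq]
  simp only [hgsq, hfsq] at hCS
  rw [hintf, hintf2, lintegral_indicator_one hUm] at hCS
  -- square both sides
  set T := ∑ i ∈ s, μ (A i)
  set I := ∑ i ∈ s, ∑ j ∈ s, μ (A i ∩ A j)
  calc T * T ≤ (I ^ ((1:ℝ)/2) * μ U ^ ((1:ℝ)/2)) * (I ^ ((1:ℝ)/2) * μ U ^ ((1:ℝ)/2)) :=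
        mul_le_mul' hCS hCS
    _ = (I ^ ((1:ℝ)/2) * I ^ ((1:ℝ)/2)) * (μ U ^ ((1:ℝ)/2) * μ U ^ ((1:ℝ)/2)) := by ring
    _ = I * μ U := by
        rw [← ENNReal.rpow_add_of_nonneg _ _ (by norm_num) (by norm_num),
          ← ENNReal.rpow_add_of_nonneg _ _ (by norm_num) (by norm_num)]
        norm_num
    _ = μ U * I := mul_comm _ _

theorem stmt_10 {Ω : Type*} [MeasurableSpace Ω] (μ : Measure Ω)
    [IsProbabilityMeasure μ]
    (A : ℕ → Set Ω) (hA : ∀ i, MeasurableSet (A i))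
    (hindep : ∀ i j, i ≠ j → μ (A i ∩ A j) = μ (A i) * μ (A j))
    (hdiv : ∑' i : ℕ, μ (A i) = ⊤) :
    μ (limsup A atTop) = 1 := by
  classical
  -- Step 1: reduce to tails having measure one
  have key : ∀ n : ℕ, μ (⋃ i, A (i + n)) = 1 := by
    intro n
    set B : ℕ → Set Ω := fun i => A (i + n) with hB
    have hBm : ∀ i, MeasurableSet (B i) := fun i => hA _
    have hBindep : ∀ i j, i ≠ j → μ (B i ∩ B j) = μ (B i) * μ (B j) := by
      intro i j hij
      exact hindep _ _ (by omega)
    -- tail sum diverges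
    have hBdiv : ∑' i : ℕ, μ (B i) = ⊤ := by
      by_contra h
      have hsplit : ∑ i ∈ Finset.range n, μ (A i) + ∑' i : ℕ, μ (A (i + n)) =
          ∑' i : ℕ, μ (A i) := ENNReal.summable.sum_add_tsum_nat_add'
      have h1 : ∑ i ∈ Finset.range n, μ (A i) ≠ ⊤ := by
        refine ne_of_lt (lt_of_le_of_lt (Finset.sum_le_sum fun i _ => prob_le_one) ?_)
        simp only [Finset.sum_const, Finset.card_range, nsmul_eq_mul, mul_one]
        exact ENNReal.natCast_lt_top n
      rw [hdiv] at hsplit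
      exact (ENNReal.add_ne_top.mpr ⟨h1, h⟩) hsplit
    set U : Set Ω := ⋃ i, B i with hU
    have hUm : MeasurableSet U := MeasurableSet.iUnion hBm
    -- For every finset s, T*T ≤ μ U * (T*T + T)
    have main : ∀ s : Finset ℕ,
        (∑ i ∈ s, μ (B i)) * (∑ i ∈ s, μ (B i)) ≤
          μ U * ((∑ i ∈ s, μ (B i)) * (∑ i ∈ s, μ (B i)) + ∑ i ∈ s, μ (B i)) := by
      intro s
      have h1 := aux_chung_erdos μ B hBm s
      have h2 : μ (⋃ i ∈ s, B i) ≤ μ U :=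
        measure_mono (Set.iUnion₂_subset fun i _ => Set.subset_iUnion B i)
      have h3 : ∑ i ∈ s, ∑ j ∈ s, μ (B i ∩ B j) ≤
          (∑ i ∈ s, μ (B i)) * (∑ i ∈ s, μ (B i)) + ∑ i ∈ s, μ (B i) := by
        have step : ∀ i ∈ s, ∀ j ∈ s, μ (B i ∩ B j) ≤
            μ (B i) * μ (B j) + if i = j then μ (B i) else 0 := by
          intro i _ j _
          by_cases hij : i = j
          · subst hij
            simp only [if_pos rfl, Set.inter_self]
            exact le_add_self
          · rw [hBindep i j hij, if_neg hij, add_zero]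
        calc ∑ i ∈ s, ∑ j ∈ s, μ (B i ∩ B j)
            ≤ ∑ i ∈ s, ∑ j ∈ s, (μ (B i) * μ (B j) + if i = j then μ (B i) else 0) :=
              Finset.sum_le_sum fun i hi => Finset.sum_le_sum fun j hj => step i hi j hj
          _ = (∑ i ∈ s, ∑ j ∈ s, μ (B i) * μ (B j)) +
              ∑ i ∈ s, ∑ j ∈ s, (if i = j then μ (B i) else 0) := by
              rw [← Finset.sum_add_distrib]
              exact Finset.sum_congr rfl fun i _ => Finset.sum_add_distrib
          _ = (∑ i ∈ s, μ (B i)) * (∑ i ∈ s, μ (B i)) + ∑ i ∈ s, μ (B i) := by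
              rw [← Finset.sum_mul_sum]
              congr 1
              exact Finset.sum_congr rfl fun i hi => by
                rw [Finset.sum_ite_eq s i (fun _ => μ (B i)), if_pos hi]
      calc (∑ i ∈ s, μ (B i)) * (∑ i ∈ s, μ (B i))
          ≤ μ (⋃ i ∈ s, B i) * ∑ i ∈ s, ∑ j ∈ s, μ (B i ∩ B j) := h1
        _ ≤ μ U * ((∑ i ∈ s, μ (B i)) * (∑ i ∈ s, μ (B i)) + ∑ i ∈ s, μ (B i)) :=
            mul_le_mul' h2 h3
    -- conclude μ U = 1
    refine le_antisymm prob_le_one ?_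
    refine ENNReal.le_of_forall_pos_le_add fun ε hε hlt => ?_
    -- choose s with sum large
    obtain ⟨s, hs⟩ : ∃ s : Finset ℕ, max 1 (ε : ENNReal)⁻¹ < ∑ i ∈ s, μ (B i) := by
      have hsup : (⨆ s : Finset ℕ, ∑ i ∈ s, μ (B i)) = ⊤ := by
        rw [← ENNReal.tsum_eq_iSup_sum]; exact hBdiv
      have hlt' : max 1 (ε : ENNReal)⁻¹ < ⨆ s : Finset ℕ, ∑ i ∈ s, μ (B i) := by
        rw [hsup]
        exact max_lt (by simp) (ENNReal.inv_lt_top.mpr (by exact_mod_cast hε))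
      exact lt_iSup_iff.mp hlt'
    set T := ∑ i ∈ s, μ (B i) with hT
    have hT0 : T ≠ 0 := by
      intro h
      rw [h] at hs
      exact (not_lt_of_ge zero_le') (lt_of_le_of_lt (le_max_left _ _) hs)
    have hTtop : T ≠ ⊤ := by
      refine ne_of_lt (lt_of_le_of_lt (Finset.sum_le_sum fun i _ => prob_le_one) ?_)
      simp only [Finset.sum_const, nsmul_eq_mul, mul_one]
      exact ENNReal.natCast_lt_top s.card
    have hεT : (ε : ENNReal)⁻¹ ≤ T := le_of_lt (lt_of_le_of_lt (le_max_right _ _) hs)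
    -- μ U ≥ T / (T + 1)
    have hdiv' : T / (T + 1) ≤ μ U := by
      have h1 := main s
      rw [← hT] at h1
      have h2 : T * T ≤ μ U * (T * (T + 1)) := by
        rw [mul_add, mul_one]; exact h1
      have h3 : (T * T) / (T * (T + 1)) ≤ μ U := ENNReal.div_le_of_le_mul h2
      rwa [ENNReal.mul_div_mul_left _ _ hT0 hTtop] at h3
    -- 1 = T/(T+1) + 1/(T+1) ≤ μ U + ε
    have hT1top : T + 1 ≠ ⊤ := by
      simp [ENNReal.add_ne_top, hTtop]
    have hone : (1 : ENNReal) = T / (T + 1) + 1 / (T + 1) := by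
      rw [← ENNReal.add_div, ENNReal.div_self (by simp) hT1top]
    have hsmall : 1 / (T + 1) ≤ (ε : ENNReal) := by
      calc 1 / (T + 1) ≤ 1 / T := ENNReal.div_le_div_left le_self_add 1
        _ = T⁻¹ := one_div T
        _ ≤ ((ε : ENNReal)⁻¹)⁻¹ := ENNReal.inv_le_inv' hεT
        _ = (ε : ENNReal) := inv_inv _
    rw [hone]
    exact add_le_add hdiv' hsmall
  -- Step 2: limsup as intersection of tails
  have hls : limsup A atTop = ⋂ n, ⋃ i, A (i + n) := by
    rw [limsup_eq_iInf_iSup_of_nat']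
    rfl
  rw [hls]
  have hm : ∀ n, MeasurableSet (⋃ i, A (i + n)) :=
    fun n => MeasurableSet.iUnion fun i => hA _
  rw [← prob_compl_eq_zero_iff (MeasurableSet.iInter hm)]
  rw [Set.compl_iInter]
  exact measure_iUnion_null fun n => (prob_compl_eq_zero_iff (hm n)).mpr (key n)
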